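/- Let P be a Borel probability measure on ℝ^d, let f satisfy Assumption (f), let G : ℝ^d → ℝ^{K×C} be bounded and measurable, and let h_base : ℝ^d → Δ_C be measurable with entries uniformly bounded away from 0. Define D* := inf_{λ ∈ ℝ₊^K} E_{X∼P}[ D_f^conj(−G(X)ᵀλ, h_base(X)) ], and suppose D* is attained by some λ* ∈ ℝ₊^K with ‖λ*‖₁ ≤ λ_max for a given constant λ_max ≥ 0. Fix ζ > 0, set g_mean := E_{X∼P}[ ‖G(X)‖₂² ] (squared spectral norm) and θ_reg := λ_max² (1 + g_mean)/2, and let λ_ζ* be the unique minimizer over ℝ₊^K of A(λ) := E_{X∼P}[ D_f^conj(−G(X)ᵀλ, h_base(X)) ] + (ζ/2) E_{X∼P}[ ‖G(X)ᵀλ‖₂² + ‖λ‖₂² ], with optimal value D_ζ* := A(λ_ζ*). Then E_{X∼P}[ D_f^conj(−G(X)ᵀλ_ζ*, h_base(X)) ] ≤ D_ζ* ≤ D* + θ_reg · ζ. -/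
import Mathlib


open MeasureTheory

/-- The probability simplex in `ℝ^C`. -/
def simplex (C : ℕ) : Set (Fin C → ℝ) := {q | (∀ c, 0 ≤ q c) ∧ ∑ c, q c = 1}

/-- The relative interior `Δ_C⁺` of the probability simplex. -/
def simplexPos (C : ℕ) : Set (Fin C → ℝ) := {q | (∀ c, 0 < q c) ∧ ∑ c, q c = 1}

/-- The f-divergence `D_f(q‖p) = ∑_c p_c f(q_c / p_c)`. -/
noncomputable def fDiv {C : ℕ} (f : ℝ → ℝ) (q p : Fin C → ℝ) : ℝ :=
  ∑ c, p c * f (q c / p c)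

/-- The convex conjugate of `D_f(·‖p)`, `sup_q (vᵀq − D_f(q‖p))`; under
Assumption (f) (`f′(0⁺) = −∞`) the supremum over `Δ_C` equals the supremum over
the relative interior `Δ_C⁺`, which is used here. -/
noncomputable def fDivConj {C : ℕ} (f : ℝ → ℝ) (v p : Fin C → ℝ) : ℝ :=
  sSup ((fun q => ∑ c, v c * q c - fDiv f q p) '' simplexPos C)

/-- Squared spectral (ℓ²-operator) norm of a `K × C` matrix:
`‖M‖₂² = sup {‖Mu‖₂² : ‖u‖₂ ≤ 1}`. -/
noncomputable def specNormSq {K C : ℕ} (M : Fin K → Fin C → ℝ) : ℝ :=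
  sSup ((fun u => ∑ k, (∑ c, M k c * u c) ^ 2) ''
    {u : Fin C → ℝ | ∑ c, u c ^ 2 ≤ 1})

lemma specNormSq_mem_zero {K C : ℕ} (M : Fin K → Fin C → ℝ) :
    (0:ℝ) ∈ ((fun u => ∑ k, (∑ c, M k c * u c) ^ 2) ''
      {u : Fin C → ℝ | ∑ c, u c ^ 2 ≤ 1}) :=
  ⟨0, by simp, by simp⟩

lemma specNormSq_ub {K C : ℕ} (M : Fin K → Fin C → ℝ) :
    ∀ y ∈ ((fun u => ∑ k, (∑ c, M k c * u c) ^ 2) ''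
      {u : Fin C → ℝ | ∑ c, u c ^ 2 ≤ 1}), y ≤ ∑ k, ∑ c, (M k c) ^ 2 := by
  rintro y ⟨u, hu, rfl⟩
  refine Finset.sum_le_sum fun k _ => ?_
  calc (∑ c, M k c * u c) ^ 2 ≤ (∑ c, (M k c)^2) * ∑ c, (u c)^2 :=
        Finset.sum_mul_sq_le_sq_mul_sq _ _ _
    _ ≤ (∑ c, (M k c)^2) * 1 :=
        mul_le_mul_of_nonneg_left hu (Finset.sum_nonneg fun c _ => sq_nonneg _)
    _ = _ := mul_one _

lemma specNormSq_bddAbove {K C : ℕ} (M : Fin K → Fin C → ℝ) :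
    BddAbove ((fun u => ∑ k, (∑ c, M k c * u c) ^ 2) ''
      {u : Fin C → ℝ | ∑ c, u c ^ 2 ≤ 1}) :=
  ⟨_, specNormSq_ub M⟩

lemma specNormSq_nonneg' {K C : ℕ} (M : Fin K → Fin C → ℝ) : 0 ≤ specNormSq M :=
  le_csSup (specNormSq_bddAbove M) (specNormSq_mem_zero M)

lemma specNormSq_le_sum_sq {K C : ℕ} (M : Fin K → Fin C → ℝ) :
    specNormSq M ≤ ∑ k, ∑ c, (M k c) ^ 2 :=
  csSup_le ⟨0, specNormSq_mem_zero M⟩ (specNormSq_ub M)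

lemma mulvec_sq_le {K C : ℕ} (M : Fin K → Fin C → ℝ) (l : Fin K → ℝ) :
    ∑ c, (∑ k, M k c * l k) ^ 2 ≤ specNormSq M * ∑ k, l k ^ 2 := by
  set w : Fin C → ℝ := fun c => ∑ k, M k c * l k with hw
  set W : ℝ := ∑ c, w c ^ 2 with hW
  have hWnn : 0 ≤ W := Finset.sum_nonneg fun c _ => sq_nonneg _
  rcases eq_or_lt_of_le hWnn with hW0 | hWpos
  · rw [← hW0]
    exact mul_nonneg (specNormSq_nonneg' M) (Finset.sum_nonneg fun k _ => sq_nonneg _)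
  · -- u = w / sqrt W lies in the ball
    set s := Real.sqrt W with hs
    have hspos : 0 < s := Real.sqrt_pos.2 hWpos
    have hs2 : s ^ 2 = W := Real.sq_sqrt hWnn
    set u : Fin C → ℝ := fun c => w c / s with hu
    have humem : ∑ c, u c ^ 2 ≤ 1 := by
      have : ∑ c, u c ^ 2 = W / s ^ 2 := by
        simp [hu, div_pow, Finset.sum_div, hW]
      rw [this, hs2, div_self (ne_of_gt hWpos)]
    have hphi : ∑ k, (∑ c, M k c * u c) ^ 2 ≤ specNormSq M :=
      le_csSup (specNormSq_bddAbove M) ⟨u, humem, rfl⟩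
    -- ∑_k (∑_c M k c * u c)^2 = (∑_k (∑_c M k c * w c)^2) / W
    have hphi' : ∑ k, (∑ c, M k c * w c) ^ 2 ≤ specNormSq M * W := by
      have : ∑ k, (∑ c, M k c * u c) ^ 2 = (∑ k, (∑ c, M k c * w c) ^ 2) / W := by
        rw [Finset.sum_div]
        refine Finset.sum_congr rfl fun k _ => ?_
        rw [hu]
        rw [show (∑ c, M k c * (w c / s)) = (∑ c, M k c * w c) / s by
          rw [Finset.sum_div]; exact Finset.sum_congr rfl fun c _ => by ring]
        rw [div_pow, hs2]
      rw [this, div_le_iff₀ hWpos] at hphi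
      exact hphi
    -- W^2 ≤ (∑ l^2) * ∑_k (∑_c M k c * w c)^2
    have hswap : W = ∑ k, l k * ∑ c, M k c * w c := by
      rw [hW]
      rw [show (∑ c, w c ^ 2) = ∑ c, ∑ k, (M k c * l k) * w c by
        refine Finset.sum_congr rfl fun c _ => ?_
        rw [pow_two]
        nth_rewrite 1 [hw]
        rw [Finset.sum_mul]]
      rw [Finset.sum_comm]
      refine Finset.sum_congr rfl fun k _ => ?_
      rw [Finset.mul_sum]
      exact Finset.sum_congr rfl fun c _ => by ring
    have hcs : W ^ 2 ≤ (∑ k, l k ^ 2) * ∑ k, (∑ c, M k c * w c) ^ 2 := by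
      rw [hswap]
      exact Finset.sum_mul_sq_le_sq_mul_sq _ _ _
    have hfin : W ^ 2 ≤ (∑ k, l k ^ 2) * (specNormSq M * W) := by
      refine hcs.trans ?_
      exact mul_le_mul_of_nonneg_left hphi' (Finset.sum_nonneg fun k _ => sq_nonneg _)
    have hWle : W ≤ specNormSq M * ∑ k, l k ^ 2 := by
      nlinarith [hWpos]
    exact hWle

lemma specNormSq_continuous {K C : ℕ} :
    Continuous (fun M : Fin K → Fin C → ℝ => specNormSq M) := by
  have hB : IsCompact {u : Fin C → ℝ | ∑ c, u c ^ 2 ≤ 1} := by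
    have hcl : IsClosed {u : Fin C → ℝ | ∑ c, u c ^ 2 ≤ 1} :=
      isClosed_le (by continuity) continuous_const
    have hbd : Bornology.IsBounded {u : Fin C → ℝ | ∑ c, u c ^ 2 ≤ 1} := by
      refine (Metric.isBounded_closedBall (x := (0 : Fin C → ℝ)) (r := 1)).subset ?_
      intro u hu
      simp only [Metric.mem_closedBall]
      rw [dist_pi_le_iff zero_le_one]
      intro c
      have h1 : u c ^ 2 ≤ 1 :=
        le_trans (Finset.single_le_sum (fun c _ => sq_nonneg (u c)) (Finset.mem_univ c)) hu
      have : |u c| ≤ 1 := (sq_le_one_iff_abs_le_one (u c)).1 h1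
      simpa [Real.dist_eq] using this
    exact Metric.isCompact_of_isClosed_isBounded hcl hbd
  refine hB.continuous_sSup ?_
  have : Continuous fun p : (Fin K → Fin C → ℝ) × (Fin C → ℝ) =>
      ∑ k, (∑ c, p.1 k c * p.2 c) ^ 2 := by
    refine continuous_finset_sum _ fun k _ => ?_
    refine (continuous_finset_sum _ fun c _ => ?_).pow 2
    exact (((continuous_apply c).comp ((continuous_apply k).comp continuous_fst)).mul
      ((continuous_apply c).comp continuous_snd))
  exact this

/-- Lemma 7 of the paper: with `θ_reg = λ_max²(1 + g_mean)/2`,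
the unique minimizer `λ_ζ*` of the regularized dual `A` satisfies
`E[D_f^conj(−G(X)ᵀλ_ζ*, h_base(X))] ≤ D_ζ* ≤ D* + θ_reg ζ`. -/
theorem regularization_bound (d K C : ℕ)
    (hd : 0 < d) (hK : 0 < K) (hC : 0 < C)
    (P : Measure (Fin d → ℝ)) [IsProbabilityMeasure P]
    (f f' f'' : ℝ → ℝ)
    (hf_deriv : ∀ t ∈ Set.Ioi (0 : ℝ), HasDerivAt f (f' t) t)
    (hf_deriv2 : ∀ t ∈ Set.Ioi (0 : ℝ), HasDerivAt f' (f'' t) t)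
    (hf''_cont : ContinuousOn f'' (Set.Ioi 0))
    (hf''_pos : ∀ t ∈ Set.Ioi (0 : ℝ), 0 < f'' t)
    (hf_one : f 1 = 0)
    (hf'_atBot : Filter.Tendsto f' (nhdsWithin 0 (Set.Ioi 0)) Filter.atBot)
    (G : (Fin d → ℝ) → Fin K → Fin C → ℝ)
    (hG_meas : ∀ k c, Measurable fun x => G x k c)
    (hG_bdd : ∃ M : ℝ, ∀ x k c, |G x k c| ≤ M)
    (hbase : (Fin d → ℝ) → Fin C → ℝ)
    (hbase_meas : ∀ c, Measurable fun x => hbase x c)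
    (hbase_simplex : ∀ x, hbase x ∈ simplex C)
    (hbase_pos : ∃ ε > (0 : ℝ), ∀ x c, ε ≤ hbase x c)
    -- the unregularized dual value `D*`, attained at `λ*` with `‖λ*‖₁ ≤ λ_max`
    (lamStar : Fin K → ℝ) (hlamStar_nonneg : ∀ k, 0 ≤ lamStar k)
    (hlamStar_min : IsMinOn
      (fun l : Fin K → ℝ =>
        ∫ x, fDivConj f (fun c => -∑ k, G x k c * l k) (hbase x) ∂P)
      {l : Fin K → ℝ | ∀ k, 0 ≤ l k} lamStar)
    (lamMax : ℝ) (hlamMax : 0 ≤ lamMax) (hlamStar_l1 : ∑ k, |lamStar k| ≤ lamMax)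
    -- constants
    (ζ : ℝ) (hζ : 0 < ζ)
    (gMean : ℝ) (hgMean : gMean = ∫ x, specNormSq (G x) ∂P)
    (θreg : ℝ) (hθreg : θreg = lamMax ^ 2 * (1 + gMean) / 2)
    -- the regularized dual `A` and its unique minimizer `λ_ζ*`
    (A : (Fin K → ℝ) → ℝ)
    (hA : ∀ lam, A lam =
      (∫ x, fDivConj f (fun c => -∑ k, G x k c * lam k) (hbase x) ∂P) +
      (ζ / 2) * ∫ x, ((∑ c, (∑ k, G x k c * lam k) ^ 2) + ∑ k, lam k ^ 2) ∂P)
    (lamZeta : Fin K → ℝ) (hlamZeta_nonneg : ∀ k, 0 ≤ lamZeta k)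
    (hlamZeta_min : IsMinOn A {l : Fin K → ℝ | ∀ k, 0 ≤ l k} lamZeta) :
    (∫ x, fDivConj f (fun c => -∑ k, G x k c * lamZeta k) (hbase x) ∂P) ≤
        A lamZeta ∧
    A lamZeta ≤
      (∫ x, fDivConj f (fun c => -∑ k, G x k c * lamStar k) (hbase x) ∂P) +
        θreg * ζ := by
  
  obtain ⟨M0, hM0⟩ := hG_bdd
  have hM0nn : 0 ≤ M0 := le_trans (abs_nonneg _) (hM0 (fun _ => 0) ⟨0, hK⟩ ⟨0, hC⟩)
  have hreg_nonneg : ∀ lam : Fin K → ℝ,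
      0 ≤ ∫ x, ((∑ c, (∑ k, G x k c * lam k) ^ 2) + ∑ k, lam k ^ 2) ∂P :=
    fun lam => integral_nonneg fun x =>
      add_nonneg (Finset.sum_nonneg fun _ _ => sq_nonneg _)
        (Finset.sum_nonneg fun _ _ => sq_nonneg _)
  constructor
  · rw [hA]
    have h1 := mul_nonneg (le_of_lt (half_pos hζ)) (hreg_nonneg lamZeta)
    linarith
  · have hmin : A lamZeta ≤ A lamStar := isMinOn_iff.1 hlamZeta_min lamStar hlamStar_nonneg
    refine hmin.trans ?_
    rw [hA lamStar]
    set L : ℝ := ∑ k, lamStar k ^ 2 with hLdef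
    set F : (Fin d → ℝ) → ℝ := fun x => ∑ c, (∑ k, G x k c * lamStar k) ^ 2 with hFdef
    set S : (Fin d → ℝ) → ℝ := fun x => specNormSq (G x) with hSdef
    have hLnn : 0 ≤ L := Finset.sum_nonneg fun k _ => sq_nonneg _
    have hGmeas : Measurable G :=
      measurable_pi_lambda G fun k => measurable_pi_lambda _ fun c => hG_meas k c
    have hSmeas : Measurable S := specNormSq_continuous.measurable.comp hGmeas
    have hSbound : ∀ x, S x ≤ (K * C : ℕ) * M0 ^ 2 := by
      intro x
      refine (specNormSq_le_sum_sq (G x)).trans ?_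
      calc ∑ k, ∑ c, (G x k c) ^ 2 ≤ ∑ _k : Fin K, ∑ _c : Fin C, M0 ^ 2 := by
            refine Finset.sum_le_sum fun k _ => Finset.sum_le_sum fun c _ => ?_
            rw [← sq_abs]
            exact pow_le_pow_left₀ (abs_nonneg _) (hM0 x k c) 2
        _ = (K * C : ℕ) * M0 ^ 2 := by
            simp [Finset.sum_const, mul_assoc, mul_comm, mul_left_comm]
    have hSnn : ∀ x, 0 ≤ S x := fun x => specNormSq_nonneg' (G x)
    have hSint : Integrable S P := by
      refine Integrable.mono' (integrable_const ((K * C : ℕ) * M0 ^ 2))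
        hSmeas.aestronglyMeasurable (Filter.Eventually.of_forall fun x => ?_)
      rw [Real.norm_eq_abs, abs_of_nonneg (hSnn x)]
      exact hSbound x
    have hFmeas : Measurable F := by
      refine Finset.measurable_sum _ fun c _ => ?_
      exact (Finset.measurable_sum _ fun k _ => (hG_meas k c).mul_const _).pow_const 2
    have hFbound : ∀ x, F x ≤ S x * L := fun x => mulvec_sq_le (G x) lamStar
    have hFnn : ∀ x, 0 ≤ F x := fun x => Finset.sum_nonneg fun c _ => sq_nonneg _
    have hFint : Integrable F P := by
      refine Integrable.mono' (hSint.mul_const L) hFmeas.aestronglyMeasurable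
        (Filter.Eventually.of_forall fun x => ?_)
      rw [Real.norm_eq_abs, abs_of_nonneg (hFnn x)]
      exact hFbound x
    have hint_le : ∫ x, F x ∂P ≤ ∫ x, S x * L ∂P :=
      integral_mono hFint (hSint.mul_const L) hFbound
    have hSL : ∫ x, S x * L ∂P = gMean * L := by
      rw [integral_mul_const, hgMean]
    have hRsplit : ∫ x, (F x + L) ∂P = (∫ x, F x ∂P) + L := by
      rw [integral_add hFint (integrable_const L), integral_const]
      simp
    have hL : L ≤ lamMax ^ 2 := by
      have h1 : L = ∑ k, |lamStar k| ^ 2 := by simp [hLdef, sq_abs]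
      calc L = ∑ k, |lamStar k| ^ 2 := h1
        _ ≤ (∑ k, |lamStar k|) ^ 2 :=
            Finset.sum_sq_le_sq_sum_of_nonneg fun k _ => abs_nonneg _
        _ ≤ lamMax ^ 2 :=
            pow_le_pow_left₀ (Finset.sum_nonneg fun k _ => abs_nonneg _) hlamStar_l1 2
    have hgnn : 0 ≤ gMean := by
      rw [hgMean]
      exact integral_nonneg fun x => specNormSq_nonneg' (G x)
    have hRint : ∫ x, ((∑ c, (∑ k, G x k c * lamStar k) ^ 2) + ∑ k, lamStar k ^ 2) ∂P
        ≤ gMean * L + L := by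
      have : (∫ x, F x ∂P) ≤ gMean * L := hSL ▸ hint_le
      calc ∫ x, ((∑ c, (∑ k, G x k c * lamStar k) ^ 2) + ∑ k, lamStar k ^ 2) ∂P
          = (∫ x, F x ∂P) + L := hRsplit
        _ ≤ gMean * L + L := by linarith
    have hkey : (ζ / 2) *
        (∫ x, ((∑ c, (∑ k, G x k c * lamStar k) ^ 2) + ∑ k, lamStar k ^ 2) ∂P)
        ≤ θreg * ζ := by
      rw [hθreg]
      have h2 : gMean * L ≤ gMean * lamMax ^ 2 := mul_le_mul_of_nonneg_left hL hgnn
      calc (ζ / 2) *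
          (∫ x, ((∑ c, (∑ k, G x k c * lamStar k) ^ 2) + ∑ k, lamStar k ^ 2) ∂P)
          ≤ (ζ / 2) * (gMean * L + L) :=
            mul_le_mul_of_nonneg_left hRint (half_pos hζ).le
        _ ≤ (ζ / 2) * (gMean * lamMax ^ 2 + lamMax ^ 2) :=
            mul_le_mul_of_nonneg_left (by linarith) (half_pos hζ).le
        _ = lamMax ^ 2 * (1 + gMean) / 2 * ζ := by ring
    linarith
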